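/- arXiv:2311.07185 — 2 statements merged into one kernel-verified Lean document; each statement's English description precedes it below -/
import Mathlib

section
/- Kolmogorov's double-negation translation is sound for classical propositional logic: define A^k recursively by (atom p)^k = ¬¬(atom p), ⊥^k = ¬¬⊥, (A → B)^k = ¬¬(A^k → B^k), (A ∧ B)^k = ¬¬(A^k ∧ B^k), (A ∨ B)^k = ¬¬(A^k ∨ B^k). Then for any propositional formula A, if A is provable classically then A^k is provable intuitionistically. -/
inductive Form (α : Type) : Type
  | atom : α → Form α
  | bot : Form α
  | imp : Form α → Form α → Form α
  | and : Form α → Form α → Form α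
  | or : Form α → Form α → Form α

def Form.neg {α : Type} (A : Form α) : Form α := Form.imp A Form.bot

/-- Natural deduction provability; `cl = true` additionally allows
double negation elimination (classical logic). -/
inductive Prov {α : Type} (cl : Bool) : List (Form α) → Form α → Prop
  | ax {Γ A} : A ∈ Γ → Prov cl Γ A
  | impI {Γ A B} : Prov cl (A :: Γ) B → Prov cl Γ (Form.imp A B)
  | impE {Γ A B} : Prov cl Γ (Form.imp A B) → Prov cl Γ A → Prov cl Γ B
  | andI {Γ A B} : Prov cl Γ A → Prov cl Γ B → Prov cl Γ (Form.and A B)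
  | andE1 {Γ A B} : Prov cl Γ (Form.and A B) → Prov cl Γ A
  | andE2 {Γ A B} : Prov cl Γ (Form.and A B) → Prov cl Γ B
  | orI1 {Γ A B} : Prov cl Γ A → Prov cl Γ (Form.or A B)
  | orI2 {Γ A B} : Prov cl Γ B → Prov cl Γ (Form.or A B)
  | orE {Γ A B C} : Prov cl Γ (Form.or A B) → Prov cl (A :: Γ) C →
      Prov cl (B :: Γ) C → Prov cl Γ C
  | botE {Γ A} : Prov cl Γ Form.bot → Prov cl Γ A
  | dne {Γ A} : cl = true → Prov cl Γ (Form.neg (Form.neg A)) → Prov cl Γ A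

def kolm {α : Type} : Form α → Form α
  | Form.atom a => Form.neg (Form.neg (Form.atom a))
  | Form.bot => Form.neg (Form.neg Form.bot)
  | Form.imp A B => Form.neg (Form.neg (Form.imp (kolm A) (kolm B)))
  | Form.and A B => Form.neg (Form.neg (Form.and (kolm A) (kolm B)))
  | Form.or A B => Form.neg (Form.neg (Form.or (kolm A) (kolm B)))

lemma prov_weaken {α : Type} {cl : Bool} {Γ Δ : List (Form α)} {A : Form α}
    (h : Prov cl Γ A) (s : Γ ⊆ Δ) : Prov cl Δ A := by
  induction h generalizing Δ with
  | ax m => exact .ax (s m)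
  | impI _ ih => exact .impI (ih (List.cons_subset_cons _ s))
  | impE _ _ ih1 ih2 => exact .impE (ih1 s) (ih2 s)
  | andI _ _ ih1 ih2 => exact .andI (ih1 s) (ih2 s)
  | andE1 _ ih => exact .andE1 (ih s)
  | andE2 _ ih => exact .andE2 (ih s)
  | orI1 _ ih => exact .orI1 (ih s)
  | orI2 _ ih => exact .orI2 (ih s)
  | orE _ _ _ ih ih1 ih2 =>
      exact .orE (ih s) (ih1 (List.cons_subset_cons _ s)) (ih2 (List.cons_subset_cons _ s))
  | botE _ ih => exact .botE (ih s)
  | dne e _ ih => exact .dne e (ih s)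

lemma dn_intro {α : Type} {cl : Bool} {Γ : List (Form α)} {A : Form α}
    (h : Prov cl Γ A) : Prov cl Γ A.neg.neg :=
  .impI (.impE (.ax List.mem_cons_self) (prov_weaken h (fun _ hx => List.mem_cons_of_mem _ hx)))

/-- From `¬¬P` and `P ⊢ Q` conclude `¬¬Q`. -/
lemma dn_map {α : Type} {cl : Bool} {Γ : List (Form α)} {P Q : Form α}
    (h : Prov cl Γ P.neg.neg) (h2 : Prov cl (P :: Γ) Q) : Prov cl Γ Q.neg.neg := by
  apply Prov.impI
  apply Prov.impE (prov_weaken h (fun _ hx => List.mem_cons_of_mem _ hx))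
  apply Prov.impI
  exact Prov.impE (.ax (by simp [Form.neg]))
    (prov_weaken h2 (by intro x hx; simp at hx ⊢; tauto))

/-- Triple negation elimination. -/
lemma tn_elim {α : Type} {cl : Bool} {Γ : List (Form α)} {A : Form α}
    (h : Prov cl Γ A.neg.neg.neg) : Prov cl Γ A.neg := by
  apply Prov.impI
  exact .impE (prov_weaken h (fun _ hx => List.mem_cons_of_mem _ hx)) (dn_intro (.ax (by simp)))

lemma kolm_stable {α : Type} {cl : Bool} {Γ : List (Form α)} (C : Form α)
    (h : Prov cl Γ (kolm C).neg.neg) : Prov cl Γ (kolm C) := by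
  cases C <;> exact tn_elim h

lemma kolm_sound_gen {α : Type} {Γ : List (Form α)} {A : Form α}
    (h : Prov true Γ A) : Prov false (Γ.map kolm) (kolm A) := by
  induction h with
  | ax m => exact .ax (List.mem_map_of_mem m)
  | impI _ ih => exact dn_intro (.impI ih)
  | @impE _ A B _ _ ih1 ih2 =>
      exact kolm_stable B (dn_map (P := Form.imp (kolm A) (kolm B)) ih1 (.impE (.ax (by simp))
        (prov_weaken ih2 (fun _ hx => List.mem_cons_of_mem _ hx))))
  | andI _ _ ih1 ih2 => exact dn_intro (.andI ih1 ih2)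
  | @andE1 _ A B _ ih => exact kolm_stable A (dn_map (P := Form.and (kolm A) (kolm B)) ih (.andE1 (B := kolm B) (.ax (by simp))))
  | @andE2 _ A B _ ih => exact kolm_stable B (dn_map (P := Form.and (kolm A) (kolm B)) ih (.andE2 (A := kolm A) (.ax (by simp))))
  | orI1 _ ih => exact dn_intro (.orI1 ih)
  | orI2 _ ih => exact dn_intro (.orI2 ih)
  | @orE _ A B C _ _ _ ih ih1 ih2 =>
      refine kolm_stable C (dn_map (P := Form.or (kolm A) (kolm B)) ih (.orE (A := kolm A) (B := kolm B) (.ax (by simp)) ?_ ?_))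
      · exact prov_weaken ih1 (by intro x hx; simp at hx ⊢; tauto)
      · exact prov_weaken ih2 (by intro x hx; simp at hx ⊢; tauto)
  | botE _ ih =>
      exact .botE (.impE ih (.impI (.ax (by simp))))
  | @dne _ A _ _ ih =>
      -- ih : Prov false Γ' (kolm (A.neg.neg)), i.e. ¬¬(kolm A.neg ⊃ kolm ⊥)
      apply kolm_stable A
      apply dn_map (P := Form.imp (kolm A.neg) (kolm .bot)) ih
      apply kolm_stable A
      apply Prov.impI
      -- ctx: (kolm A).neg :: F :: Γ'; goal: ⊥
      refine Prov.impE (A := Form.bot.neg) ?_ (.impI (.ax (by simp)))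
      refine Prov.impE (A := kolm A.neg) (.ax (by simp [kolm, Form.neg])) ?_
      -- goal: kolm A.neg = ¬¬(kolm A ⊃ kolm ⊥)
      apply dn_intro
      apply Prov.impI
      exact .botE (.impE (A := kolm A) (.ax (by simp [Form.neg])) (.ax (by simp)))

theorem kolmogorov_sound {α : Type} (A : Form α) :
    Prov true ([] : List (Form α)) A → Prov false ([] : List (Form α)) (kolm A) := by
  intro h
  simpa using kolm_sound_gen h
end

section
/- Kolmogorov's translation is faithful: with A^k as defined by the Kolmogorov double-negation translation, A^k is provable intuitionistically if and only if A is provable classically. -/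
namespace KolmAux

variable {α : Type} {cl : Bool}

theorem weaken {Γ Δ : List (Form α)} {A : Form α} (h : Prov cl Γ A) (hs : Γ ⊆ Δ) :
    Prov cl Δ A := by
  induction h generalizing Δ with
  | ax hm => exact Prov.ax (hs hm)
  | impI _ ih => exact Prov.impI (ih (List.cons_subset_cons _ hs))
  | impE _ _ ih1 ih2 => exact Prov.impE (ih1 hs) (ih2 hs)
  | andI _ _ ih1 ih2 => exact Prov.andI (ih1 hs) (ih2 hs)
  | andE1 _ ih => exact Prov.andE1 (ih hs)
  | andE2 _ ih => exact Prov.andE2 (ih hs)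
  | orI1 _ ih => exact Prov.orI1 (ih hs)
  | orI2 _ ih => exact Prov.orI2 (ih hs)
  | orE _ _ _ ih ihl ihr =>
      exact Prov.orE (ih hs) (ihl (List.cons_subset_cons _ hs))
        (ihr (List.cons_subset_cons _ hs))
  | botE _ ih => exact Prov.botE (ih hs)
  | dne hc _ ih => exact Prov.dne hc (ih hs)

theorem wk1 {Γ : List (Form α)} {A B : Form α} (h : Prov cl Γ A) : Prov cl (B :: Γ) A :=
  weaken h (List.subset_cons_self _ _)

theorem ax0 {Γ : List (Form α)} {A : Form α} : Prov cl (A :: Γ) A :=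
  Prov.ax (List.mem_cons_self)

theorem ax1 {Γ : List (Form α)} {A B : Form α} : Prov cl (B :: A :: Γ) A :=
  Prov.ax (List.mem_cons_of_mem _ (List.mem_cons_self))

theorem ax2 {Γ : List (Form α)} {A B C : Form α} : Prov cl (C :: B :: A :: Γ) A :=
  Prov.ax (List.mem_cons_of_mem _ (List.mem_cons_of_mem _ (List.mem_cons_self)))

theorem dni {Γ : List (Form α)} {A : Form α} (h : Prov cl Γ A) :
    Prov cl Γ (Form.neg (Form.neg A)) :=
  Prov.impI (Prov.impE ax0 (wk1 h))

theorem tneg {Γ : List (Form α)} {A : Form α}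
    (h : Prov cl Γ (Form.neg (Form.neg (Form.neg A)))) : Prov cl Γ (Form.neg A) :=
  Prov.impI (Prov.impE (wk1 h) (dni ax0))

theorem kolm_neg (A : Form α) : ∃ C, kolm A = Form.neg C := by
  cases A <;> exact ⟨_, rfl⟩

theorem kdne {Γ : List (Form α)} {A : Form α}
    (h : Prov cl Γ (Form.neg (Form.neg (kolm A)))) : Prov cl Γ (kolm A) := by
  obtain ⟨C, hC⟩ := kolm_neg A
  rw [hC] at h ⊢
  exact tneg h

/-- from `¬¬X` and `X :: Γ ⊢ ⊥` get `⊥` -/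
theorem dnE {Γ : List (Form α)} {X : Form α}
    (h : Prov cl Γ (Form.neg (Form.neg X))) (h2 : Prov cl (X :: Γ) Form.bot) :
    Prov cl Γ Form.bot :=
  Prov.impE h (Prov.impI h2)

theorem toTrue {Γ : List (Form α)} {A : Form α} (h : Prov false Γ A) : Prov true Γ A := by
  induction h with
  | ax hm => exact Prov.ax hm
  | impI _ ih => exact Prov.impI ih
  | impE _ _ ih1 ih2 => exact Prov.impE ih1 ih2
  | andI _ _ ih1 ih2 => exact Prov.andI ih1 ih2
  | andE1 _ ih => exact Prov.andE1 ih
  | andE2 _ ih => exact Prov.andE2 ih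
  | orI1 _ ih => exact Prov.orI1 ih
  | orI2 _ ih => exact Prov.orI2 ih
  | orE _ _ _ ih ihl ihr => exact Prov.orE ih ihl ihr
  | botE _ ih => exact Prov.botE ih
  | dne hc _ _ => exact absurd hc Bool.false_ne_true

theorem kiff (A : Form α) : ∀ Γ : List (Form α), Prov true Γ (kolm A) ↔ Prov true Γ A := by
  induction A with
  | atom a => exact fun Γ => ⟨Prov.dne rfl, dni⟩
  | bot => exact fun Γ => ⟨Prov.dne rfl, dni⟩
  | imp A B ihA ihB =>
      intro Γ
      constructor
      · intro h
        have h' : Prov true Γ (Form.imp (kolm A) (kolm B)) := Prov.dne rfl h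
        exact Prov.impI ((ihB _).mp (Prov.impE (wk1 h') ((ihA _).mpr ax0)))
      · intro h
        exact dni (Prov.impI ((ihB _).mpr (Prov.impE (wk1 h) ((ihA _).mp ax0))))
  | and A B ihA ihB =>
      intro Γ
      constructor
      · intro h
        have h' : Prov true Γ (Form.and (kolm A) (kolm B)) := Prov.dne rfl h
        exact Prov.andI ((ihA _).mp (Prov.andE1 h')) ((ihB _).mp (Prov.andE2 h'))
      · intro h
        exact dni (Prov.andI ((ihA _).mpr (Prov.andE1 h)) ((ihB _).mpr (Prov.andE2 h)))
  | or A B ihA ihB =>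
      intro Γ
      constructor
      · intro h
        have h' : Prov true Γ (Form.or (kolm A) (kolm B)) := Prov.dne rfl h
        exact Prov.orE h' (Prov.orI1 ((ihA _).mp ax0)) (Prov.orI2 ((ihB _).mp ax0))
      · intro h
        exact dni (Prov.orE h (Prov.orI1 ((ihA _).mpr ax0)) (Prov.orI2 ((ihB _).mpr ax0)))

theorem sound {Γ : List (Form α)} {A : Form α} (h : Prov true Γ A) :
    Prov false (Γ.map kolm) (kolm A) := by
  induction h with
  | ax hm => exact Prov.ax (List.mem_map_of_mem hm)
  | impI _ ih => exact dni (Prov.impI ih)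
  | @impE Γ A B _ _ ih1 ih2 =>
      apply kdne
      apply Prov.impI
      exact dnE (wk1 ih1) (Prov.impE ax1 (Prov.impE ax0 (wk1 (wk1 ih2))))
  | andI _ _ ih1 ih2 => exact dni (Prov.andI ih1 ih2)
  | andE1 _ ih =>
      apply kdne
      exact Prov.impI (dnE (wk1 ih) (Prov.impE ax1 (Prov.andE1 ax0)))
  | andE2 _ ih =>
      apply kdne
      exact Prov.impI (dnE (wk1 ih) (Prov.impE ax1 (Prov.andE2 ax0)))
  | orI1 _ ih => exact dni (Prov.orI1 ih)
  | orI2 _ ih => exact dni (Prov.orI2 ih)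
  | @orE Γ A B C _ _ _ ihO ihl ihr =>
      obtain ⟨D, hD⟩ := kolm_neg C
      rw [hD] at ihl ihr ⊢
      apply Prov.impI
      apply dnE (wk1 ihO)
      refine Prov.orE ax0 ?_ ?_
      · exact Prov.impE
          (weaken ihl (List.cons_subset_cons _
            (fun x hx => List.mem_cons_of_mem _ (List.mem_cons_of_mem _ hx)))) ax2
      · exact Prov.impE
          (weaken ihr (List.cons_subset_cons _
            (fun x hx => List.mem_cons_of_mem _ (List.mem_cons_of_mem _ hx)))) ax2
  | @botE Γ A _ ih =>
      obtain ⟨D, hD⟩ := kolm_neg A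
      rw [hD]
      exact Prov.impI (Prov.botE (Prov.impE (wk1 ih) (Prov.impI ax0)))
  | @dne Γ A hc _ ih =>
      apply kdne
      apply Prov.impI
      apply dnE (wk1 ih)
      exact Prov.impE
        (Prov.impE ax0 (dni (Prov.impI (Prov.botE (Prov.impE ax2 ax0)))))
        (Prov.impI ax0)

end KolmAux

theorem kolmogorov_faithful {α : Type} (A : Form α) :
    Prov false ([] : List (Form α)) (kolm A) ↔ Prov true ([] : List (Form α)) A := by
  constructor
  · intro h
    exact (KolmAux.kiff A []).mp (KolmAux.toTrue h)
  · intro h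
    exact KolmAux.sound h
end
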